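/- arXiv:1206.6642 — 2 statements merged into one kernel-verified Lean document; each statement's English description precedes it below -/
import Mathlib

section
/- Let m ≥ 5 be a prime, let k and r be positive integers, let β be the unique integer with 0 ≤ β < m^k and 24β ≡ r (mod m^k), and set t = (r(m^{2k}−1) + 24β)/(24 m^k), which is a nonnegative integer. Let a(n) be the coefficients of the formal power series q^{r(m^{2k}−1)/24} · ∏_{j≥1}(1 − q^{m^k j})^{m^k r} · (∏_{j≥1}(1 − q^j))^{−r} ∈ ℤ[[q]]. Then, as formal power series over ℤ, Σ_{n≥0} a(m^k n) q^n = q^t · (Σ_{n≥0} p_r(m^k n + β) q^n) · ∏_{j≥1}(1 − q^j)^{m^k r}. -/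
open PowerSeries

/-- `eulerProd d` is the formal power series `∏_{j ≥ 1} (1 - q^(d*j))` over `ℤ`:
its `n`-th coefficient agrees with that of any sufficiently long finite partial product. -/
noncomputable def eulerProd (d : ℕ) : PowerSeries ℤ :=
  PowerSeries.mk fun n =>
    PowerSeries.coeff n (∏ j ∈ Finset.range (n + 1), (1 - (PowerSeries.X : PowerSeries ℤ) ^ (d * (j + 1))))

/-- `multipartition r n` is the number of `r`-component multipartitions of `n`,
i.e. the number of `r`-tuples of integer partitions whose sizes sum to `n`. -/
def multipartition (r n : ℕ) : ℕ :=
  ∑ c ∈ Finset.Nat.antidiagonalTuple r n, ∏ i, Fintype.card (Nat.Partition (c i))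

namespace EtaAux

open Finset

/-- Partial Euler product. -/
noncomputable def pp (d L : ℕ) : PowerSeries ℤ :=
  ∏ j ∈ Finset.range L, (1 - (PowerSeries.X : PowerSeries ℤ) ^ (d * (j + 1)))

lemma coeff_eulerProd (d n : ℕ) :
    PowerSeries.coeff n (eulerProd d) = PowerSeries.coeff n (pp d (n + 1)) :=
  PowerSeries.coeff_mk _ _

lemma coeff_pp_add (d : ℕ) (hd : 0 < d) (n : ℕ) (j : ℕ) :
    PowerSeries.coeff n (pp d (n + 1 + j)) = PowerSeries.coeff n (pp d (n + 1)) := by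
  induction j with
  | zero => rfl
  | succ j ih =>
    rw [← ih]
    rw [show n + 1 + (j + 1) = (n + 1 + j) + 1 from rfl, pp, Finset.prod_range_succ, ← pp]
    rw [mul_sub, mul_one, map_sub, PowerSeries.coeff_mul_X_pow', if_neg, sub_zero]
    have : n + 1 + j + 1 ≤ d * (n + 1 + j + 1) := Nat.le_mul_of_pos_left _ hd
    omega

lemma coeff_pp_of_lt {d : ℕ} (hd : 0 < d) {n L : ℕ} (h : n < L) :
    PowerSeries.coeff n (pp d L) = PowerSeries.coeff n (eulerProd d) := by
  rw [coeff_eulerProd]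
  have : L = n + 1 + (L - (n + 1)) := by omega
  rw [this, coeff_pp_add d hd]

lemma coeff_mul_congr {f f' g g' : PowerSeries ℤ} {n : ℕ}
    (hf : ∀ i ≤ n, PowerSeries.coeff i f = PowerSeries.coeff i f')
    (hg : ∀ i ≤ n, PowerSeries.coeff i g = PowerSeries.coeff i g') :
    PowerSeries.coeff n (f * g) = PowerSeries.coeff n (f' * g') := by
  rw [PowerSeries.coeff_mul, PowerSeries.coeff_mul]
  refine Finset.sum_congr rfl ?_
  rintro ⟨a, b⟩ hab
  rw [Finset.HasAntidiagonal.mem_antidiagonal] at hab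
  rw [hf a (by omega), hg b (by omega)]

/-- "expansion" operator: substitute `X ↦ X^d`. -/
noncomputable def ex (d : ℕ) (f : PowerSeries ℤ) : PowerSeries ℤ :=
  PowerSeries.mk fun n => if d ∣ n then PowerSeries.coeff (n / d) f else 0

lemma coeff_ex (d : ℕ) (f : PowerSeries ℤ) (n : ℕ) :
    PowerSeries.coeff n (ex d f) = if d ∣ n then PowerSeries.coeff (n / d) f else 0 :=
  PowerSeries.coeff_mk _ _

lemma sum_antidiag_expand (d m : ℕ) (hd : 0 < d) (F : ℕ × ℕ → ℤ)
    (hF : ∀ p ∈ Finset.HasAntidiagonal.antidiagonal (d * m), ¬ d ∣ p.1 → F p = 0) :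
    ∑ p ∈ Finset.HasAntidiagonal.antidiagonal (d * m), F p
      = ∑ p ∈ Finset.HasAntidiagonal.antidiagonal m, F (d * p.1, d * p.2) := by
  have hinj : Function.Injective (fun p : ℕ × ℕ => (d * p.1, d * p.2)) := by
    rintro ⟨a, b⟩ ⟨a', b'⟩ h
    simp only [Prod.mk.injEq] at h
    have h1 := Nat.eq_of_mul_eq_mul_left hd h.1
    have h2 := Nat.eq_of_mul_eq_mul_left hd h.2
    simp [h1, h2]
  have hmap := Finset.sum_map (Finset.HasAntidiagonal.antidiagonal m) ⟨fun p => (d * p.1, d * p.2), hinj⟩ F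
  simp only [Function.Embedding.coeFn_mk] at hmap
  rw [← hmap]
  refine (Finset.sum_subset ?_ ?_).symm
  · intro p hp
    rw [Finset.mem_map] at hp
    obtain ⟨q, hq, rfl⟩ := hp
    rw [Finset.HasAntidiagonal.mem_antidiagonal] at hq ⊢
    simp only [Function.Embedding.coeFn_mk]
    rw [← Nat.mul_add, hq]
  · intro p hp hnot
    rw [Finset.HasAntidiagonal.mem_antidiagonal] at hp
    by_cases h1 : d ∣ p.1
    · exfalso
      apply hnot
      have h2 : d ∣ p.2 := (Nat.dvd_add_right h1).mp (hp ▸ Dvd.intro m rfl)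
      rw [Finset.mem_map]
      refine ⟨(p.1 / d, p.2 / d), ?_, ?_⟩
      · rw [Finset.HasAntidiagonal.mem_antidiagonal]
        have : d * (p.1 / d + p.2 / d) = d * m := by
          rw [Nat.mul_add, Nat.mul_div_cancel' h1, Nat.mul_div_cancel' h2, hp]
        exact Nat.eq_of_mul_eq_mul_left hd this
      · simp only [Function.Embedding.coeFn_mk]
        rw [Nat.mul_div_cancel' h1, Nat.mul_div_cancel' h2]
    · exact hF p (Finset.HasAntidiagonal.mem_antidiagonal.mpr hp) h1

lemma ex_mul (d : ℕ) (hd : 0 < d) (f g : PowerSeries ℤ) :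
    ex d (f * g) = ex d f * ex d g := by
  ext n
  conv_rhs => rw [PowerSeries.coeff_mul]
  rw [coeff_ex]
  by_cases h : d ∣ n
  · obtain ⟨m, rfl⟩ := h
    rw [if_pos (Dvd.intro m rfl), Nat.mul_div_cancel_left m hd, PowerSeries.coeff_mul]
    rw [sum_antidiag_expand d m hd _ (by
      intro p _ hp1
      rw [coeff_ex, if_neg hp1, zero_mul])]
    refine Finset.sum_congr rfl ?_
    rintro ⟨a, b⟩ _
    rw [coeff_ex, coeff_ex, if_pos (Dvd.intro a rfl), if_pos (Dvd.intro b rfl),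
      Nat.mul_div_cancel_left a hd, Nat.mul_div_cancel_left b hd]
  · rw [if_neg h]
    refine (Finset.sum_eq_zero ?_).symm
    rintro ⟨a, b⟩ hab
    rw [Finset.HasAntidiagonal.mem_antidiagonal] at hab
    by_cases h1 : d ∣ a
    · have h2 : ¬ d ∣ b := fun h2 => h (hab ▸ Nat.dvd_add h1 h2)
      rw [coeff_ex d g, if_neg h2, mul_zero]
    · rw [coeff_ex d f, if_neg h1, zero_mul]

lemma ex_one (d : ℕ) (hd : 0 < d) : ex d 1 = 1 := by
  ext n
  rw [coeff_ex]
  simp only [PowerSeries.coeff_one]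
  by_cases h : d ∣ n
  · rw [if_pos h]
    by_cases h0 : n = 0
    · simp [h0]
    · rw [if_neg h0, if_neg]
      intro hq
      apply h0
      have h2 := Nat.div_mul_cancel h
      rw [hq, zero_mul] at h2
      omega
  · rw [if_neg h, if_neg]
    intro h0
    exact h (h0 ▸ dvd_zero d)

lemma ex_pow (d : ℕ) (hd : 0 < d) (f : PowerSeries ℤ) (N : ℕ) :
    ex d (f ^ N) = (ex d f) ^ N := by
  induction N with
  | zero => simpa using ex_one d hd
  | succ N ih => rw [pow_succ, pow_succ, ex_mul d hd, ih]

lemma ex_one_sub_pow (d : ℕ) (hd : 0 < d) (e : ℕ) :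
    ex d (1 - PowerSeries.X ^ e) = 1 - (PowerSeries.X : PowerSeries ℤ) ^ (d * e) := by
  ext n
  rw [coeff_ex, map_sub, map_sub, PowerSeries.coeff_one, PowerSeries.coeff_one,
    PowerSeries.coeff_X_pow, PowerSeries.coeff_X_pow]
  by_cases h : d ∣ n
  · obtain ⟨a, rfl⟩ := h
    rw [if_pos (Dvd.intro a rfl), Nat.mul_div_cancel_left a hd]
    have h1 : (d * a = 0) ↔ (a = 0) := by
      rw [Nat.mul_eq_zero]
      omega
    have h2 : (d * a = d * e) ↔ (a = e) := by
      constructor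
      · exact fun hh => Nat.eq_of_mul_eq_mul_left hd hh
      · rintro rfl; rfl
    simp only [h1, h2]
  · rw [if_neg h]
    have h0 : n ≠ 0 := by rintro rfl; exact h (dvd_zero d)
    have h1 : n ≠ d * e := by rintro rfl; exact h (Dvd.intro e rfl)
    rw [if_neg h0, if_neg h1, sub_zero]

lemma ex_pp (d : ℕ) (hd : 0 < d) (L : ℕ) : ex d (pp 1 L) = pp d L := by
  induction L with
  | zero => simpa [pp] using ex_one d hd
  | succ L ih =>
    have h1 : pp 1 (L + 1) = pp 1 L * (1 - (PowerSeries.X : PowerSeries ℤ) ^ (L + 1)) := by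
      rw [pp, pp, Finset.prod_range_succ, one_mul]
    have h2 : pp d (L + 1) = pp d L * (1 - (PowerSeries.X : PowerSeries ℤ) ^ (d * (L + 1))) := by
      rw [pp, pp, Finset.prod_range_succ]
    rw [h1, h2, ex_mul d hd, ih, ex_one_sub_pow d hd]

lemma eulerProd_eq_ex {d : ℕ} (hd : 0 < d) : eulerProd d = ex d (eulerProd 1) := by
  ext n
  rw [coeff_eulerProd, coeff_ex, show pp d (n+1) = ex d (pp 1 (n+1)) from (ex_pp d hd _).symm,
    coeff_ex]
  by_cases h : d ∣ n
  · rw [if_pos h, if_pos h, coeff_pp_of_lt one_pos (by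
      have := Nat.div_le_self n d
      omega)]
  · rw [if_neg h, if_neg h]

lemma U_mul_ex (M : ℕ) (hM : 0 < M) (g f : PowerSeries ℤ) :
    (PowerSeries.mk fun n => PowerSeries.coeff (M * n) (ex M g * f))
      = g * PowerSeries.mk fun n => PowerSeries.coeff (M * n) f := by
  ext n
  rw [PowerSeries.coeff_mk, PowerSeries.coeff_mul, PowerSeries.coeff_mul]
  rw [sum_antidiag_expand M n hM _ (by
    intro p _ hp1
    rw [coeff_ex, if_neg hp1, zero_mul])]
  refine Finset.sum_congr rfl ?_
  rintro ⟨a, b⟩ _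
  rw [coeff_ex, if_pos (Dvd.intro a rfl), Nat.mul_div_cancel_left a hM, PowerSeries.coeff_mk]

noncomputable section

open Finset Finset.HasAntidiagonal

open scoped Classical

variable {α : Type*}

/-- A convenience constructor for the power series whose coefficients indicate a subset. -/
def indicatorSeries (α : Type*) [Semiring α] (s : Set ℕ) : PowerSeries α :=
  PowerSeries.mk fun n => if n ∈ s then 1 else 0

theorem coeff_indicator (s : Set ℕ) [Semiring α] (n : ℕ) :
    coeff n (indicatorSeries α s) = if n ∈ s then 1 else 0 :=
  coeff_mk _ _

theorem coeff_indicator_pos (s : Set ℕ) [Semiring α] (n : ℕ) (h : n ∈ s) :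
    coeff n (indicatorSeries α s) = 1 := by rw [coeff_indicator, if_pos h]

theorem coeff_indicator_neg (s : Set ℕ) [Semiring α] (n : ℕ) (h : n ∉ s) :
    coeff n (indicatorSeries α s) = 0 := by rw [coeff_indicator, if_neg h]

theorem constantCoeff_indicator (s : Set ℕ) [Semiring α] :
    constantCoeff (indicatorSeries α s) = if 0 ∈ s then 1 else 0 :=
  rfl
-- The main workhorse of the partition theorem proof.
theorem partialGF_prop (α : Type*) [CommSemiring α] (n : ℕ) (s : Finset ℕ) (hs : ∀ i ∈ s, 0 < i)
    (c : ℕ → Set ℕ) (hc : ∀ i, i ∉ s → 0 ∈ c i) :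
    #{p : n.Partition | (∀ j, p.parts.count j ∈ c j) ∧ ∀ j ∈ p.parts, j ∈ s} =
      coeff n (∏ i ∈ s, indicatorSeries α ((· * i) '' c i)) := by
  simp_rw [coeff_prod, coeff_indicator, prod_boole, sum_boole]
  apply congr_arg
  simp only [mem_univ, forall_true_left, not_and, not_forall, exists_prop,
    Set.mem_image, not_exists]
  set φ : (a : Nat.Partition n) →
    a ∈ filter (fun p ↦ (∀ (j : ℕ), Multiset.count j p.parts ∈ c j) ∧ ∀ j ∈ p.parts, j ∈ s) univ →
    ℕ →₀ ℕ := fun p _ => {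
      toFun := fun i => Multiset.count i p.parts • i
      support := Finset.filter (fun i => i ≠ 0) p.parts.toFinset
      mem_support_toFun := fun a => by
        simp only [smul_eq_mul, ne_eq, mul_eq_zero, Multiset.count_eq_zero]
        rw [not_or, not_not]
        simp only [Multiset.mem_toFinset, not_not, mem_filter] }
  refine Finset.card_bij φ ?_ ?_ ?_
  · intro a ha
    simp only [φ, not_forall, not_exists, not_and, exists_prop, mem_filter]
    rw [mem_finsuppAntidiag]
    dsimp only [ne_eq, smul_eq_mul, id_eq, eq_mpr_eq_cast, le_eq_subset, Finsupp.coe_mk]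
    simp only [mem_univ, forall_true_left, not_and, not_forall, exists_prop,
      mem_filter, true_and] at ha
    refine ⟨⟨?_, fun i ↦ ?_⟩, fun i _ ↦ ⟨a.parts.count i, ha.1 i, rfl⟩⟩
    · conv_rhs => simp [← a.parts_sum]
      rw [sum_multiset_count_of_subset _ s]
      · simp only [smul_eq_mul]
      · intro i
        simp only [Multiset.mem_toFinset, not_not, mem_filter]
        apply ha.2
    · simp only [ne_eq, Multiset.mem_toFinset, not_not, mem_filter, and_imp]
      exact fun hi _ ↦ ha.2 i hi
  · intro p₁ hp₁ p₂ hp₂ h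
    apply Nat.Partition.ext
    simp only [true_and, mem_univ, mem_filter] at hp₁ hp₂
    ext i
    simp only [φ, ne_eq, Multiset.mem_toFinset, not_not, smul_eq_mul, Finsupp.mk.injEq] at h
    by_cases hi : i = 0
    · rw [hi]
      rw [Multiset.count_eq_zero_of_notMem]
      · rw [Multiset.count_eq_zero_of_notMem]
        intro a; exact Nat.lt_irrefl 0 (hs 0 (hp₂.2 0 a))
      intro a; exact Nat.lt_irrefl 0 (hs 0 (hp₁.2 0 a))
    · rw [← mul_left_inj' hi]
      rw [funext_iff] at h
      exact h.2 i
  · simp only [φ, mem_filter, mem_finsuppAntidiag, mem_univ, exists_prop, true_and, and_assoc]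
    rintro f ⟨hf, hf₃, hf₄⟩
    have hf' : f ∈ finsuppAntidiag s n := mem_finsuppAntidiag.mpr ⟨hf, hf₃⟩
    simp only [mem_finsuppAntidiag] at hf'
    refine ⟨⟨∑ i ∈ s, Multiset.replicate (f i / i) i, ?_, ?_⟩, ?_, ?_, ?_⟩
    · intro i hi
      simp only [exists_prop, Multiset.mem_sum, mem_map, Function.Embedding.coeFn_mk] at hi
      rcases hi with ⟨t, ht, z⟩
      apply hs
      rwa [Multiset.eq_of_mem_replicate z]
    · simp_rw [Multiset.sum_sum, Multiset.sum_replicate, Nat.nsmul_eq_mul]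
      rw [← hf'.1]
      refine sum_congr rfl fun i hi => Nat.div_mul_cancel ?_
      rcases hf₄ i hi with ⟨w, _, hw₂⟩
      rw [← hw₂]
      exact dvd_mul_left _ _
    · intro i
      simp_rw [Multiset.count_sum', Multiset.count_replicate, sum_ite_eq']
      split_ifs with h
      · rcases hf₄ i h with ⟨w, hw₁, hw₂⟩
        rwa [← hw₂, Nat.mul_div_cancel _ (hs i h)]
      · exact hc _ h
    · intro i hi
      rw [Multiset.mem_sum] at hi
      rcases hi with ⟨j, hj₁, hj₂⟩
      rwa [Multiset.eq_of_mem_replicate hj₂]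
    · ext i
      simp_rw [Multiset.count_sum', Multiset.count_replicate, sum_ite_eq']
      simp only [ne_eq, Multiset.mem_toFinset, not_not, smul_eq_mul, ite_mul,
        zero_mul, Finsupp.coe_mk]
      split_ifs with h
      · apply Nat.div_mul_cancel
        rcases hf₄ i h with ⟨w, _, hw₂⟩
        apply Dvd.intro_left _ hw₂
      · apply symm
        rw [← Finsupp.notMem_support_iff]
        exact notMem_mono hf'.2 h



lemma geom_inv (e : ℕ) :
    (1 - (PowerSeries.X : PowerSeries ℤ) ^ (e + 1)) * indicatorSeries ℤ {k | (e + 1) ∣ k} = 1 := by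
  ext n
  rw [sub_mul, one_mul, map_sub, mul_comm, PowerSeries.coeff_mul_X_pow', coeff_indicator,
    PowerSeries.coeff_one]
  simp only [Set.mem_setOf_eq]
  by_cases h0 : n = 0
  · subst h0
    rw [if_pos (dvd_zero _), if_neg (by omega), if_pos rfl, sub_zero]
  · rw [if_neg h0]
    by_cases hle : e + 1 ≤ n
    · rw [if_pos hle, coeff_indicator]
      simp only [Set.mem_setOf_eq]
      have hiff : (e + 1) ∣ n ↔ (e + 1) ∣ (n - (e + 1)) := by
        constructor
        · intro h
          exact Nat.dvd_sub h dvd_rfl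
        · intro h
          have := Nat.dvd_add h (dvd_refl (e + 1))
          rwa [Nat.sub_add_cancel hle] at this
      by_cases hd : (e + 1) ∣ n
      · rw [if_pos hd, if_pos (hiff.mp hd), sub_self]
      · rw [if_neg hd, if_neg (fun hc => hd (hiff.mpr hc)), sub_zero]
    · rw [if_neg hle, if_neg, sub_zero]
      intro hd
      have := Nat.le_of_dvd (by omega) hd
      omega

/-- partial product of the partition generating function indicators -/
def Iprod (L : ℕ) : PowerSeries ℤ :=
  ∏ i ∈ Finset.range L, indicatorSeries ℤ {k | (i + 1) ∣ k}

lemma pp_mul_Iprod (L : ℕ) : pp 1 L * Iprod L = 1 := by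
  rw [pp, Iprod, ← Finset.prod_mul_distrib]
  refine Finset.prod_eq_one ?_
  intro i _
  rw [one_mul]
  exact geom_inv i

/-- The partition-counting power series. -/
def Pser : PowerSeries ℤ := PowerSeries.mk fun n => (Fintype.card (Nat.Partition n) : ℤ)

lemma coeff_Iprod (n L : ℕ) (h : n ≤ L) :
    PowerSeries.coeff n (Iprod L) = (Fintype.card (Nat.Partition n) : ℤ) := by
  have hprop := partialGF_prop ℤ n ((Finset.range L).map ⟨Nat.succ, Nat.succ_injective⟩)
    (by
      intro i hi
      rw [Finset.mem_map] at hi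
      obtain ⟨j, _, rfl⟩ := hi
      exact Nat.succ_pos j)
    (fun _ => Set.univ) (fun _ _ => trivial)
  rw [Finset.prod_map] at hprop
  have himg : ∀ i : ℕ, ((· * (Nat.succ i)) '' Set.univ) = {k | (i + 1) ∣ k} := by
    intro i
    ext k
    simp only [Set.image_univ, Set.mem_range, Set.mem_setOf_eq]
    constructor
    · rintro ⟨a, rfl⟩
      exact Dvd.intro_left a rfl
    · rintro ⟨c, rfl⟩
      exact ⟨c, mul_comm _ _⟩
  simp only [Function.Embedding.coeFn_mk, himg] at hprop
  rw [Iprod, ← hprop]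
  have hfil : ∀ p : n.Partition,
      (∀ j, p.parts.count j ∈ (Set.univ : Set ℕ)) ∧
        (∀ j ∈ p.parts, j ∈ (Finset.range L).map ⟨Nat.succ, Nat.succ_injective⟩) := by
    intro p
    refine ⟨fun _ => trivial, fun j hj => ?_⟩
    have hj1 : 0 < j := p.parts_pos hj
    have hj2 : j ≤ n := by
      have := Multiset.single_le_sum (fun _ _ => Nat.zero_le _) _ hj
      simpa [p.parts_sum] using this
    rw [Finset.mem_map]
    refine ⟨j - 1, Finset.mem_range.mpr (by omega), ?_⟩
    simp only [Function.Embedding.coeFn_mk]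
    omega
  norm_cast
  rw [Finset.filter_true_of_mem (fun p _ => hfil p)]
  exact Finset.card_univ

lemma euler_mul_Pser : eulerProd 1 * Pser = 1 := by
  ext n
  rw [coeff_mul_congr (f' := pp 1 (n + 1)) (g' := Iprod (n + 1))
    (fun i hi => (coeff_pp_of_lt one_pos (by omega)).symm)
    (fun i hi => by rw [Pser, PowerSeries.coeff_mk, coeff_Iprod i (n + 1) (by omega)]),
    pp_mul_Iprod]

lemma multipartition_succ (r n : ℕ) :
    multipartition (r + 1) n
      = ∑ p ∈ Finset.HasAntidiagonal.antidiagonal n, Fintype.card (Nat.Partition p.1) * multipartition r p.2 := by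
  rw [multipartition]
  have key : ∑ c ∈ Finset.Nat.antidiagonalTuple (r + 1) n, ∏ i, Fintype.card (Nat.Partition (c i))
      = ∑ x ∈ (Finset.HasAntidiagonal.antidiagonal n).sigma (fun p => Finset.Nat.antidiagonalTuple r p.2),
          Fintype.card (Nat.Partition x.1.1) * ∏ i, Fintype.card (Nat.Partition (x.2 i)) := by
    refine Finset.sum_nbij' (i := fun c => ⟨(c 0, ∑ i, Fin.tail c i), Fin.tail c⟩)
      (j := fun x => Fin.cons x.1.1 x.2) ?_ ?_ ?_ ?_ ?_
    · intro c hc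
      rw [Finset.Nat.mem_antidiagonalTuple] at hc
      rw [Finset.mem_sigma, Finset.HasAntidiagonal.mem_antidiagonal, Finset.Nat.mem_antidiagonalTuple]
      refine ⟨?_, rfl⟩
      rw [← hc, Fin.sum_univ_succ]
      rfl
    · intro x hx
      rw [Finset.mem_sigma, Finset.HasAntidiagonal.mem_antidiagonal, Finset.Nat.mem_antidiagonalTuple] at hx
      rw [Finset.Nat.mem_antidiagonalTuple, Fin.sum_cons, hx.2, hx.1]
    · intro c hc
      simp [Fin.cons_self_tail]
    · rintro ⟨⟨a, b⟩, f⟩ hx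
      rw [Finset.mem_sigma, Finset.HasAntidiagonal.mem_antidiagonal, Finset.Nat.mem_antidiagonalTuple] at hx
      simp only [Fin.cons_zero, Fin.tail_cons]
      have : (∑ i, f i) = b := hx.2
      simp [this]
    · intro c hc
      rw [Fin.prod_univ_succ]
      rfl
  rw [key, Finset.sum_sigma]
  refine Finset.sum_congr rfl ?_
  intro p hp
  rw [multipartition, Finset.mul_sum]

lemma coeff_Pser_pow (r : ℕ) : ∀ n : ℕ,
    PowerSeries.coeff n (Pser ^ r) = (multipartition r n : ℤ) := by
  induction r with
  | zero =>
    intro n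
    rw [pow_zero, PowerSeries.coeff_one, multipartition]
    cases n with
    | zero => simp
    | succ n => simp [Finset.Nat.antidiagonalTuple_zero_succ]
  | succ r ih =>
    intro n
    rw [pow_succ', PowerSeries.coeff_mul, multipartition_succ]
    push_cast
    refine Finset.sum_congr rfl ?_
    rintro ⟨a, b⟩ _
    rw [ih, Pser, PowerSeries.coeff_mk]

end

end EtaAux

theorem eta_quotient_U_operator_identity
    (m k r β t t' : ℕ) (hm : m.Prime) (hm5 : 5 ≤ m) (hk : 0 < k) (hr : 0 < r)
    (hβ : β < m ^ k) (hβ24 : 24 * β ≡ r [MOD m ^ k])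
    (ht' : 24 * t' = r * (m ^ (2 * k) - 1))
    (ht : 24 * m ^ k * t = r * (m ^ (2 * k) - 1) + 24 * β)
    (u : (PowerSeries ℤ)ˣ) (hu : (u : PowerSeries ℤ) = eulerProd 1) :
    (PowerSeries.mk fun n => PowerSeries.coeff (m ^ k * n)
        ((PowerSeries.X : PowerSeries ℤ) ^ t' * eulerProd (m ^ k) ^ (m ^ k * r)
          * ((u⁻¹ : (PowerSeries ℤ)ˣ) : PowerSeries ℤ) ^ r)) =
      (PowerSeries.X : PowerSeries ℤ) ^ t
        * (PowerSeries.mk fun n => (multipartition r (m ^ k * n + β) : ℤ))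
        * eulerProd 1 ^ (m ^ k * r) := by

  have hM : 0 < m ^ k := pow_pos hm.pos k
  have hu' : ((u⁻¹ : (PowerSeries ℤ)ˣ) : PowerSeries ℤ) = EtaAux.Pser := by
    have h1 : (u : PowerSeries ℤ) * EtaAux.Pser = 1 := by rw [hu]; exact EtaAux.euler_mul_Pser
    calc ((u⁻¹ : (PowerSeries ℤ)ˣ) : PowerSeries ℤ)
        = ↑u⁻¹ * ((u : PowerSeries ℤ) * EtaAux.Pser) := by rw [h1, mul_one]
      _ = EtaAux.Pser := by rw [← mul_assoc, Units.inv_mul, one_mul]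
  have hw : m ^ k * t = t' + β := by
    have h2 : 24 * (m ^ k * t) = r * (m ^ (2 * k) - 1) + 24 * β := by rw [← ht]; ring
    omega
  have hE : eulerProd (m ^ k) ^ (m ^ k * r) = EtaAux.ex (m ^ k) (eulerProd 1 ^ (m ^ k * r)) := by
    rw [EtaAux.eulerProd_eq_ex hM, EtaAux.ex_pow _ hM]
  have hQ : (PowerSeries.mk fun n => PowerSeries.coeff (m ^ k * n)
        ((PowerSeries.X : PowerSeries ℤ) ^ t' * EtaAux.Pser ^ r))
      = (PowerSeries.X : PowerSeries ℤ) ^ t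
          * PowerSeries.mk (fun n => (multipartition r (m ^ k * n + β) : ℤ)) := by
    ext n
    rw [PowerSeries.coeff_mk, mul_comm ((PowerSeries.X : PowerSeries ℤ) ^ t'),
      PowerSeries.coeff_mul_X_pow', mul_comm ((PowerSeries.X : PowerSeries ℤ) ^ t),
      PowerSeries.coeff_mul_X_pow']
    by_cases hn : t ≤ n
    · have hsplit : m ^ k * n = m ^ k * t + m ^ k * (n - t) := by
        rw [← Nat.mul_add, Nat.add_sub_cancel' hn]
      rw [if_pos (show t' ≤ m ^ k * n by omega), if_pos hn, PowerSeries.coeff_mk,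
        EtaAux.coeff_Pser_pow]
      norm_cast
      congr 1
      omega
    · have h1 : 1 ≤ t - n := by omega
      have h2 : m ^ k * 1 ≤ m ^ k * (t - n) := Nat.mul_le_mul_left _ h1
      have hsplit : m ^ k * t = m ^ k * n + m ^ k * (t - n) := by
        rw [← Nat.mul_add, Nat.add_sub_cancel' (le_of_not_ge hn)]
      rw [if_neg (show ¬ t' ≤ m ^ k * n by omega), if_neg hn]
  have hinner : (PowerSeries.X : PowerSeries ℤ) ^ t' * eulerProd (m ^ k) ^ (m ^ k * r)
        * ((u⁻¹ : (PowerSeries ℤ)ˣ) : PowerSeries ℤ) ^ r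
      = EtaAux.ex (m ^ k) (eulerProd 1 ^ (m ^ k * r))
          * ((PowerSeries.X : PowerSeries ℤ) ^ t' * EtaAux.Pser ^ r) := by
    rw [hu', hE]; ring
  rw [hinner, EtaAux.U_mul_ex _ hM, hQ]
  ring
end

section
/- For every nonnegative integer n, p_2(5n + 3) ≡ 0 (mod 5). -/
open Polynomial Finset

/-- triangular-ish numbers: `tri k = k*(k-1)/2`. -/
def tri : ℕ → ℕ
  | 0 => 0
  | k+1 => tri k + k

lemma tri_add (a b : ℕ) : tri (a + b) = tri a + tri b + a * b := by
  induction b with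
  | zero => simp [tri]
  | succ b ih => show tri (a+b) + (a+b) = _; rw [ih]; show _ = tri a + (tri b + b) + a * (b+1); ring

lemma two_mul_tri (k : ℕ) : 2 * tri (k+1) = k * (k+1) := by
  induction k with
  | zero => simp [tri]
  | succ k ih => show 2 * (tri (k+1) + (k+1)) = _; rw [Nat.mul_add, ih]; ring

lemma tri_succ (k : ℕ) : tri (k+1) = tri k + k := rfl

lemma le_tri_succ (t : ℕ) : t ≤ tri (t+1) := by
  induction t with
  | zero => simp [tri]
  | succ t ih => rw [tri_succ]; omega

/-- Gaussian binomial coefficients as polynomials over ℤ. -/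
noncomputable def gb : ℕ → ℕ → Polynomial ℤ
  | _, 0 => 1
  | 0, _+1 => 0
  | n+1, k+1 => gb n (k+1) + X ^ (n - k) * gb n k

@[simp] lemma gb_zero_right (n : ℕ) : gb n 0 = 1 := by cases n <;> rfl

lemma gb_succ_succ (n k : ℕ) : gb (n+1) (k+1) = gb n (k+1) + X ^ (n - k) * gb n k := rfl

lemma gb_eq_zero : ∀ {n k : ℕ}, n < k → gb n k = 0 := by
  intro n
  induction n with
  | zero => intro k hk; match k, hk with | k+1, _ => rfl
  | succ n ih =>
    intro k hk
    match k, hk with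
    | k+1, hk =>
      rw [gb_succ_succ, ih (by omega), ih (by omega), mul_zero, add_zero]

@[simp] lemma gb_self (n : ℕ) : gb n n = 1 := by
  induction n with
  | zero => rfl
  | succ n ih =>
    rw [gb_succ_succ, gb_eq_zero (by omega), ih, Nat.sub_self, pow_zero, one_mul, zero_add]

/-- The truncated Euler product `∏_{j=1}^{m} (1 - X^j)` over ℤ. -/
noncomputable def ef (m : ℕ) : Polynomial ℤ := ∏ i ∈ range m, (1 - X ^ (i+1))

lemma ef_succ (m : ℕ) : ef (m+1) = ef m * (1 - X ^ (m+1)) := Finset.prod_range_succ _ _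

lemma ef_ne_zero (m : ℕ) : ef m ≠ 0 := by
  intro h
  have := congrArg (Polynomial.eval 0) h
  simp [ef, Polynomial.eval_prod] at this

lemma gb_factorial : ∀ n k : ℕ, k ≤ n → ef k * ef (n - k) * gb n k = ef n := by
  intro n
  induction n with
  | zero => intro k hk; interval_cases k; simp [ef]
  | succ n ih =>
    intro k hk
    match k with
    | 0 => simp [ef]
    | k+1 =>
      rcases Nat.lt_or_ge n (k+1) with h | h
      · -- k = n
        have hk' : k = n := by omega
        subst hk'
        rw [gb_succ_succ, gb_eq_zero (by omega), gb_self, Nat.sub_self, Nat.sub_self, pow_zero]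
        simp [ef]
      · -- k+1 ≤ n
        have e6 : n + 1 - (k+1) = n - k := by omega
        have e4 : n - k = n - (k+1) + 1 := by omega
        have e5 : ef (n - k) = ef (n-(k+1)) * (1 - X ^ (n-k)) := by
          conv_lhs => rw [e4]
          rw [ef_succ, ← e4]
        have e3 : ef (k+1) = ef k * (1 - X ^ (k+1)) := ef_succ k
        have e7 : (X : Polynomial ℤ) ^ (n-k) * X ^ (k+1) = X ^ (n+1) := by
          rw [← pow_add]; congr 1; omega
        have ih1 := ih (k+1) h
        have ih2 := ih k (by omega)
        rw [gb_succ_succ, e6, ef_succ n]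
        linear_combination (ef (k+1) * gb n (k+1)) * e5 + (1 - X^(n-k)) * ih1
          + (X^(n-k) * ef (n-k) * gb n k) * e3 + (X^(n-k) * (1 - X^(k+1))) * ih2
          + (- ef n) * e7

lemma gb_symm {n k : ℕ} (h : k ≤ n) : gb n k = gb n (n - k) := by
  have f1 := gb_factorial n k h
  have f2 := gb_factorial n (n - k) (Nat.sub_le _ _)
  rw [Nat.sub_sub_self h] at f2
  have hne : ef k * ef (n - k) ≠ 0 := mul_ne_zero (ef_ne_zero _) (ef_ne_zero _)
  apply mul_left_cancel₀ hne
  calc ef k * ef (n-k) * gb n k = ef n := f1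
    _ = ef (n-k) * ef k * gb n (n-k) := f2.symm
    _ = ef k * ef (n-k) * gb n (n-k) := by ring

/-- Cauchy's q-binomial theorem, in an arbitrary commutative ring. -/
lemma cauchy {R : Type*} [CommRing R] (q z w : R) :
    ∀ M : ℕ, ∏ j ∈ range M, (w + z * q^j)
      = ∑ k ∈ range (M+1), z^k * w^(M-k) * q^(tri k) * (aeval q (gb M k)) := by
  intro M
  induction M with
  | zero => simp [tri]
  | succ M ih =>
    rw [prod_range_succ, ih]
    conv_rhs => rw [Finset.sum_range_succ']
    rw [Finset.sum_mul]
    have e1 : (∑ k ∈ range (M+1), z^k * w^(M-k) * q^(tri k) * (aeval q (gb M k)) * (w + z * q^M))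
        = (∑ k ∈ range (M+1), z^k * w^(M-k) * q^(tri k) * (aeval q (gb M k)) * w)
          + ∑ k ∈ range (M+1), z^k * w^(M-k) * q^(tri k) * (aeval q (gb M k)) * (z * q^M) := by
      rw [← Finset.sum_add_distrib]
      exact Finset.sum_congr rfl fun k _ => by ring
    have hw : (∑ k ∈ range (M+2), z^k * w^(M-k) * q^(tri k) * (aeval q (gb M k)) * w)
        = ∑ k ∈ range (M+1), z^k * w^(M-k) * q^(tri k) * (aeval q (gb M k)) * w := by
      rw [Finset.sum_range_succ, gb_eq_zero (by omega)]
      simp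
    rw [e1, ← hw, Finset.sum_range_succ']
    have hc : z^0 * w^(M-0) * q^(tri 0) * (aeval q (gb M 0)) * w
        = z^0 * w^(M+1-0) * q^(tri 0) * (aeval q (gb (M+1) 0)) := by
      simp only [tri, pow_zero, one_mul, mul_one, Nat.sub_zero, gb_zero_right, map_one]
      ring
    rw [hc, add_right_comm, add_left_inj, ← Finset.sum_add_distrib]
    apply Finset.sum_congr rfl
    intro k hk
    have hk' : k ≤ M := Nat.lt_succ_iff.mp (mem_range.mp hk)
    have hgb : (aeval q) (gb (M+1) (k+1)) = aeval q (gb M (k+1)) + q^(M-k) * aeval q (gb M k) := by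
      rw [gb_succ_succ]; simp [map_add, map_mul, map_pow]
    have h1 : M + 1 - (k+1) = M - k := by omega
    rcases Nat.lt_or_ge k M with h | h
    · have h3 : M - k = (M - (k+1)) + 1 := by omega
      have h4 : tri (k+1) + (M-k) = tri k + M := by rw [tri_succ]; omega
      rw [hgb, h1]
      calc z^(k+1) * w^(M-(k+1)) * q^(tri (k+1)) * (aeval q (gb M (k+1))) * w
            + z^k * w^(M-k) * q^(tri k) * (aeval q (gb M k)) * (z * q^M)
          = z^(k+1) * (w^(M-(k+1)) * w) * q^(tri (k+1)) * aeval q (gb M (k+1))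
            + z^(k+1) * w^(M-k) * (q^(tri (k+1)) * q^(M-k)) * aeval q (gb M k) := by
            rw [← pow_add, h4, pow_add]; ring
        _ = z^(k+1) * w^(M-k) * q^(tri (k+1)) * (aeval q (gb M (k+1)) + q^(M-k) * aeval q (gb M k)) := by
            rw [← pow_succ, ← h3]; ring
    · have hM : k = M := by omega
      subst hM
      rw [hgb, h1, Nat.sub_self, pow_zero, gb_eq_zero (by omega), gb_self]
      simp only [map_zero, map_one, mul_zero, zero_mul, zero_add, mul_one, one_mul]
      rw [tri_succ, pow_add]
      ring

section Jacobi

/-- base ring for the two-variable computation -/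
local notation "D" => Polynomial (Polynomial ℤ)

noncomputable def qq : D := Polynomial.C Polynomial.X
noncomputable def zz : D := Polynomial.X

lemma sum_range_id_tri (N : ℕ) : ∑ j ∈ range N, j = tri N := by
  induction N with
  | zero => rfl
  | succ N ih => rw [Finset.sum_range_succ, ih, tri_succ]

lemma expA {t N : ℕ} (ht : t ≤ N) :
    N*(N+1+t) + tri (N-t) = (N*N + tri (N+1)) + tri (t+1) := by
  obtain ⟨d, rfl⟩ := Nat.exists_eq_add_of_le ht
  rw [Nat.add_sub_cancel_left]
  rw [show t + d + 1 = (t+1) + d from by omega, tri_add]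
  have h2 := two_mul_tri t
  ring_nf
  ring_nf at h2
  linarith

lemma expB {t N : ℕ} (ht : t ≤ N) :
    N*(N-t) + tri (N+1+t) = (N*N + tri (N+1)) + tri (t+1) := by
  obtain ⟨d, rfl⟩ := Nat.exists_eq_add_of_le ht
  rw [Nat.add_sub_cancel_left]
  have e1 : tri (t+d+1+t) = tri (t+1) + tri (t+d) + (t+1)*(t+d) := by
    rw [show t+d+1+t = (t+1)+(t+d) from by omega, tri_add]
  have e2 : tri (t+d+1) = tri (t+1) + tri d + (t+1)*d := by
    rw [show t+d+1 = (t+1)+d from by omega, tri_add]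
  have e3 : tri (t+d) = tri t + tri d + t*d := tri_add t d
  have h2 := two_mul_tri t
  have h3 := tri_succ t
  rw [e1, e2, e3]
  ring_nf
  ring_nf at h2 h3
  linarith

lemma one_sub_zz_ne : (1 - zz : D) ≠ 0 := by
  intro h
  have := congrArg (Polynomial.eval (0 : Polynomial ℤ)) h
  simp [zz] at this

lemma qq_pow_mul_one_sub_zz_ne (E : ℕ) : (qq^E * (1 - zz) : D) ≠ 0 := by
  apply mul_ne_zero
  · apply pow_ne_zero
    simp [qq, Polynomial.C_eq_zero, Polynomial.X_ne_zero]
  · exact one_sub_zz_ne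

lemma phi_aeval (p : Polynomial ℤ) :
    (Polynomial.evalRingHom (1 : Polynomial ℤ)) (Polynomial.aeval qq p) = p := by
  rw [Polynomial.aeval_def, Polynomial.hom_eval₂]
  have h1 : (Polynomial.evalRingHom (1 : Polynomial ℤ)) qq = Polynomial.X := by
    simp [qq]
  have h2 : (Polynomial.evalRingHom (1 : Polynomial ℤ)).comp (algebraMap ℤ D)
      = algebraMap ℤ (Polynomial ℤ) := Subsingleton.elim _ _
  rw [h1, h2, ← Polynomial.aeval_def]
  exact Polynomial.aeval_X_left_apply p

lemma jacobiSq (N : ℕ) :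
    (ef N)^2 = ∑ t ∈ range (N+1),
      (-1)^t * ((2*t+1 : ℕ) : Polynomial ℤ) * X^(tri (t+1)) * gb (2*N+1) (N+1+t) := by
  classical
  have key := cauchy qq (-zz) (qq^N) (2*N+1)
  -- LHS refactorization
  have lhs_eq : ∏ j ∈ range (2*N+1), (qq^N + (-zz) * qq^j)
      = qq^(N*N + tri (N+1)) * ((1 - zz)
          * ∏ i ∈ range N, ((1 - zz*qq^(i+1)) * (qq^(i+1) - zz))) := by
    rw [show 2*N+1 = N + (N+1) from by omega, Finset.prod_range_add]
    have pA : ∏ j ∈ range N, (qq^N + (-zz) * qq^j)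
        = qq^(tri N) * ∏ i ∈ range N, (qq^(i+1) - zz) := by
      have h : ∀ j ∈ range N, qq^N + (-zz) * qq^j = qq^j * (qq^(N-j) - zz) := by
        intro j hj
        have hj' : j < N := mem_range.mp hj
        have : qq^j * qq^(N-j) = qq^N := by rw [← pow_add]; congr 1; omega
        rw [mul_sub, this]; ring
      rw [Finset.prod_congr rfl h, Finset.prod_mul_distrib, Finset.prod_pow_eq_pow_sum,
        sum_range_id_tri]
      congr 1
      rw [← Finset.prod_range_reflect (fun i => qq^(i+1) - zz) N]
      apply Finset.prod_congr rfl
      intro j hj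
      have hj' : j < N := mem_range.mp hj
      congr 2
      omega
    have pBC : ∏ x ∈ range (N+1), (qq^N + (-zz) * qq^(N+x))
        = (qq^(N*N) * ∏ i ∈ range N, (1 - zz*qq^(i+1))) * (qq^N * (1 - zz)) := by
      rw [Finset.prod_range_succ']
      refine congrArg₂ (· * ·) ?_ ?_
      · have h : ∀ x ∈ range N, qq^N + (-zz) * qq^(N+(x+1)) = qq^N * (1 - zz*qq^(x+1)) := by
          intro x hx
          have : qq^N * (zz * qq^(x+1)) = zz * qq^(N+(x+1)) := by
            rw [← mul_assoc, mul_comm (qq^N) zz, mul_assoc, ← pow_add]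
          rw [mul_sub, mul_one, this]; ring
        rw [Finset.prod_congr rfl h, Finset.prod_mul_distrib, Finset.prod_const,
          Finset.card_range, ← pow_mul]
      · rw [add_zero]; ring
    rw [pA, pBC]
    rw [show N*N + tri (N+1) = tri N + (N*N + N) from by rw [tri_succ]; omega]
    rw [Finset.prod_mul_distrib, pow_add, pow_add]
    ring
  -- RHS refactorization
  have rhs_eq : ∑ k ∈ range (2*N+1+1),
        (-zz)^k * (qq^N)^(2*N+1-k) * qq^(tri k) * (Polynomial.aeval qq (gb (2*N+1) k))
      = qq^(N*N + tri (N+1)) * ((1 - zz)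
          * ∑ t ∈ range (N+1), (-1)^(N-t) * qq^(tri (t+1))
              * (Polynomial.aeval qq (gb (2*N+1) (N+1+t)))
              * (zz^(N-t) * ∑ i ∈ range (2*t+1), zz^i)) := by
    rw [show 2*N+1+1 = (N+1) + (N+1) from by omega, Finset.sum_range_add]
    rw [← Finset.sum_range_reflect
      (fun k => (-zz)^k * (qq^N)^(2*N+1-k) * qq^(tri k) * (Polynomial.aeval qq (gb (2*N+1) k))) (N+1)]
    rw [Finset.mul_sum, Finset.mul_sum, ← Finset.sum_add_distrib]
    apply Finset.sum_congr rfl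
    intro t htm
    have ht : t ≤ N := Nat.lt_succ_iff.mp (mem_range.mp htm)
    have hsub : N + 1 - 1 - t = N - t := by omega
    rw [hsub]
    have hgbsym : gb (2*N+1) (N-t) = gb (2*N+1) (N+1+t) := by
      rw [gb_symm (show N-t ≤ 2*N+1 from by omega)]
      congr 1
      omega
    have hsign : ((-zz)^(N+1+t) : D) = -((-1)^(N-t) * zz^(N+1+t)) := by
      rw [show (-zz : D) = (-1) * zz from by ring, mul_pow,
        show N+1+t = (N-t) + (2*t+1) from by omega, pow_add]
      have : ((-1 : D))^(2*t+1) = -1 := by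
        rw [pow_add, pow_mul]
        norm_num
      rw [this]; ring
    have hsign' : ((-zz)^(N-t) : D) = (-1)^(N-t) * zz^(N-t) := by
      rw [show (-zz : D) = (-1) * zz from by ring, mul_pow]
    have hq1 : ((qq^N)^(2*N+1-(N-t)) * qq^(tri (N-t)) : D)
        = qq^((N*N + tri (N+1)) + tri (t+1)) := by
      rw [← pow_mul, ← pow_add, ← expA ht]
      congr 1
      have : 2*N+1-(N-t) = N+1+t := by omega
      rw [this]
    have hq2 : ((qq^N)^(2*N+1-(N+1+t)) * qq^(tri (N+1+t)) : D)
        = qq^((N*N + tri (N+1)) + tri (t+1)) := by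
      rw [← pow_mul, ← pow_add, ← expB ht]
      congr 1
      have : 2*N+1-(N+1+t) = N-t := by omega
      rw [this]
    have hgeom : (1 - zz) * ∑ i ∈ range (2*t+1), zz^i = 1 - zz^(2*t+1) := by
      have := geom_sum_mul zz (2*t+1)
      linear_combination -this
    have hzz : zz^(N-t) * zz^(2*t+1) = zz^(N+1+t) := by
      rw [← pow_add]; congr 1; omega
    calc (-zz)^(N-t) * (qq^N)^(2*N+1-(N-t)) * qq^(tri (N-t)) * (Polynomial.aeval qq (gb (2*N+1) (N-t)))
          + (-zz)^(N+1+t) * (qq^N)^(2*N+1-(N+1+t)) * qq^(tri (N+1+t)) * (Polynomial.aeval qq (gb (2*N+1) (N+1+t)))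
        = (-1)^(N-t) * qq^((N*N + tri (N+1)) + tri (t+1))
            * (Polynomial.aeval qq (gb (2*N+1) (N+1+t))) * (zz^(N-t) - zz^(N+1+t)) := by
          rw [hgbsym, hsign, hsign']
          rw [show ∀ a b c d : D, a * b * c * d = a * (b * c) * d from fun a b c d => by ring,
            show ∀ a b c d : D, -(a) * b * c * d = -(a * (b * c) * d) from fun a b c d => by ring]
          rw [hq1, hq2]
          ring
      _ = _ := by
          rw [show zz^(N-t) - zz^(N+1+t) = (1-zz) * (zz^(N-t) * ∑ i ∈ range (2*t+1), zz^i) from by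
            rw [show (1-zz) * (zz^(N-t) * ∑ i ∈ range (2*t+1), zz^i)
                = zz^(N-t) * ((1-zz) * ∑ i ∈ range (2*t+1), zz^i) from by ring, hgeom,
              mul_sub, mul_one, hzz]]
          rw [pow_add]
          ring
  -- combine and cancel
  have main : (1 - zz) * ∏ i ∈ range N, ((1 - zz*qq^(i+1)) * (qq^(i+1) - zz))
      = (1 - zz) * ∑ t ∈ range (N+1), (-1)^(N-t) * qq^(tri (t+1))
          * (Polynomial.aeval qq (gb (2*N+1) (N+1+t)))
          * (zz^(N-t) * ∑ i ∈ range (2*t+1), zz^i) := by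
    have h := lhs_eq.symm.trans (key.trans rhs_eq)
    exact mul_left_cancel₀ (pow_ne_zero _ (show (qq:D) ≠ 0 from by
      simp [qq, Polynomial.C_eq_zero, Polynomial.X_ne_zero])) h
  have main2 : ∏ i ∈ range N, ((1 - zz*qq^(i+1)) * (qq^(i+1) - zz))
      = ∑ t ∈ range (N+1), (-1)^(N-t) * qq^(tri (t+1))
          * (Polynomial.aeval qq (gb (2*N+1) (N+1+t)))
          * (zz^(N-t) * ∑ i ∈ range (2*t+1), zz^i) :=
    mul_left_cancel₀ one_sub_zz_ne main
  -- evaluate z := 1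
  have ev := congrArg (Polynomial.evalRingHom (1 : Polynomial ℤ)) main2
  rw [map_prod, map_sum] at ev
  have hW : ∀ i ∈ range N, (Polynomial.evalRingHom (1 : Polynomial ℤ))
      ((1 - zz*qq^(i+1)) * (qq^(i+1) - zz))
      = (-1) * ((1 - X^(i+1)) * (1 - X^(i+1))) := by
    intro i _
    simp only [map_mul, map_sub, map_one, map_pow]
    have h1 : (Polynomial.evalRingHom (1 : Polynomial ℤ)) zz = 1 := by simp [zz]
    have h2 : (Polynomial.evalRingHom (1 : Polynomial ℤ)) qq = X := by simp [qq]
    rw [h1, h2]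
    ring
  rw [Finset.prod_congr rfl hW, Finset.prod_mul_distrib, Finset.prod_const, Finset.prod_mul_distrib] at ev
  have hS : ∀ t ∈ range (N+1), (Polynomial.evalRingHom (1 : Polynomial ℤ))
      ((-1)^(N-t) * qq^(tri (t+1)) * (Polynomial.aeval qq (gb (2*N+1) (N+1+t)))
        * (zz^(N-t) * ∑ i ∈ range (2*t+1), zz^i))
      = (-1)^(N-t) * ((2*t+1 : ℕ) : Polynomial ℤ) * X^(tri (t+1)) * gb (2*N+1) (N+1+t) := by
    intro t _
    simp only [map_mul, map_pow, map_sum, map_neg, map_one]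
    have h1 : (Polynomial.evalRingHom (1 : Polynomial ℤ)) zz = 1 := by simp [zz]
    have h2 : (Polynomial.evalRingHom (1 : Polynomial ℤ)) qq = X := by simp [qq]
    rw [h1, h2, phi_aeval]
    simp only [one_pow, Finset.sum_const, Finset.card_range, nsmul_eq_mul, mul_one]
    ring
  rw [Finset.sum_congr rfl hS, Finset.card_range] at ev
  -- ev : (-1)^N * ((∏ (1-X^(i+1))) * (∏ (1-X^(i+1)))) = ∑ ...
  have efsq : ((-1 : Polynomial ℤ))^N * ((-1 : Polynomial ℤ))^N = 1 := by
    rw [← pow_add, Even.neg_one_pow ⟨N, by ring⟩]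
  calc (ef N)^2 = (-1)^N * ((-1)^N * ((∏ i ∈ range N, (1 - X^(i+1)))
        * ∏ i ∈ range N, (1 - X^(i+1)))) := by
        rw [← mul_assoc, efsq, one_mul, sq, ef]
    _ = (-1)^N * ∑ t ∈ range (N+1), (-1)^(N-t) * ((2*t+1 : ℕ) : Polynomial ℤ)
          * X^(tri (t+1)) * gb (2*N+1) (N+1+t) := by rw [ev]
    _ = _ := by
        rw [Finset.mul_sum]
        apply Finset.sum_congr rfl
        intro t htm
        have ht : t ≤ N := Nat.lt_succ_iff.mp (mem_range.mp htm)
        have : ((-1 : Polynomial ℤ))^N * (-1)^(N-t) = (-1)^t := by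
          rw [← pow_add, show N + (N-t) = t + 2*(N-t) from by omega, pow_add, pow_mul]
          simp
        rw [← mul_assoc, ← mul_assoc, ← mul_assoc, this]
  
end Jacobi

section PS

open PowerSeries
open scoped Classical

-- ==== adapted from Archive/Wiedijk100Theorems/Partition.lean ====

/-- A convenience constructor for the power series whose coefficients indicate a subset. -/
noncomputable def indicatorSeries (α : Type*) [Semiring α] (s : Set ℕ) : PowerSeries α :=
  PowerSeries.mk fun n => if n ∈ s then 1 else 0

theorem coeff_indicator {α : Type*} (s : Set ℕ) [Semiring α] (n : ℕ) :
    PowerSeries.coeff (R := α) n (indicatorSeries _ s) = if n ∈ s then 1 else 0 :=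
  coeff_mk _ _

theorem coeff_indicator_pos {α : Type*} (s : Set ℕ) [Semiring α] (n : ℕ) (h : n ∈ s) :
    PowerSeries.coeff (R := α) n (indicatorSeries _ s) = 1 := by rw [coeff_indicator, if_pos h]

theorem coeff_indicator_neg {α : Type*} (s : Set ℕ) [Semiring α] (n : ℕ) (h : n ∉ s) :
    PowerSeries.coeff (R := α) n (indicatorSeries _ s) = 0 := by rw [coeff_indicator, if_neg h]

theorem constantCoeff_indicator {α : Type*} (s : Set ℕ) [Semiring α] :
    PowerSeries.constantCoeff (R := α) (indicatorSeries _ s) = if 0 ∈ s then 1 else 0 :=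
  rfl

theorem num_series' {α : Type*} [Field α] (i : ℕ) :
    (1 - (X : PowerSeries α) ^ (i + 1))⁻¹ = indicatorSeries α {k | i + 1 ∣ k} := by
  rw [PowerSeries.inv_eq_iff_mul_eq_one]
  · ext n
    cases n with
    | zero => simp [mul_sub, zero_pow, constantCoeff_indicator]
    | succ n =>
      simp only [PowerSeries.coeff_one, if_false, mul_sub, mul_one, coeff_indicator,
        LinearMap.map_sub, reduceCtorEq]
      simp_rw [PowerSeries.coeff_mul, PowerSeries.coeff_X_pow, coeff_indicator,
        @boole_mul _ _ _ _]
      erw [@sum_ite _ _ _ _ _ (fun _ => Classical.propDecidable _), sum_ite]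
      simp_rw [@filter_filter _ _ _ _ _, sum_const_zero, add_zero, sum_const, nsmul_eq_mul, mul_one,
        sub_eq_iff_eq_add, zero_add]
      symm
      split_ifs with h
      · suffices #{a ∈ antidiagonal (n + 1) | i + 1 ∣ a.fst ∧ a.snd = i + 1} = 1 by
          simp only [Set.mem_setOf_eq]; convert congr_arg ((↑) : ℕ → α) this; norm_cast
        rw [card_eq_one]
        cases' h with p hp
        refine ⟨((i + 1) * (p - 1), i + 1), ?_⟩
        ext ⟨a₁, a₂⟩
        simp only [mem_filter, Prod.mk.injEq, Finset.HasAntidiagonal.mem_antidiagonal, mem_singleton]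
        constructor
        · rintro ⟨a_left, ⟨a, rfl⟩, rfl⟩
          refine ⟨?_, rfl⟩
          rw [Nat.mul_sub_left_distrib, ← hp, ← a_left, mul_one, Nat.add_sub_cancel]
        · rintro ⟨rfl, rfl⟩
          match p with
          | 0 => rw [mul_zero] at hp; cases hp
          | p + 1 => rw [hp]; simp [mul_add]
      · suffices #{a ∈ antidiagonal (n + 1) | i + 1 ∣ a.fst ∧ a.snd = i + 1} = 0 by
          simp only [Set.mem_setOf_eq]; convert congr_arg ((↑) : ℕ → α) this; norm_cast
        rw [card_eq_zero]
        apply eq_empty_of_forall_notMem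
        simp only [Prod.forall, mem_filter, not_and, Finset.HasAntidiagonal.mem_antidiagonal]
        rintro _ h₁ h₂ ⟨a, rfl⟩ rfl
        apply h
        simp [← h₂]
  · simp [zero_pow]

open Finset.HasAntidiagonal in
theorem partialGF_prop (α : Type*) [CommSemiring α] (n : ℕ) (s : Finset ℕ) (hs : ∀ i ∈ s, 0 < i)
    (c : ℕ → Set ℕ) (hc : ∀ i, i ∉ s → 0 ∈ c i) :
    #{p : n.Partition | (∀ j, p.parts.count j ∈ c j) ∧ ∀ j ∈ p.parts, j ∈ s} =
      PowerSeries.coeff (R := α) n (∏ i ∈ s, indicatorSeries α ((· * i) '' c i)) := by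
  simp_rw [coeff_prod, coeff_indicator, prod_boole, sum_boole]
  apply congr_arg
  simp only [mem_univ, forall_true_left, not_and, not_forall, exists_prop,
    Set.mem_image, not_exists]
  set φ : (a : Nat.Partition n) →
    a ∈ filter (fun p ↦ (∀ (j : ℕ), Multiset.count j p.parts ∈ c j) ∧ ∀ j ∈ p.parts, j ∈ s) univ →
    ℕ →₀ ℕ := fun p _ => {
      toFun := fun i => Multiset.count i p.parts • i
      support := Finset.filter (fun i => i ≠ 0) p.parts.toFinset
      mem_support_toFun := fun a => by
        simp only [smul_eq_mul, ne_eq, mul_eq_zero, Multiset.count_eq_zero]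
        rw [not_or, not_not]
        simp only [Multiset.mem_toFinset, not_not, mem_filter] }
  refine Finset.card_bij φ ?_ ?_ ?_
  · intro a ha
    simp only [φ, not_forall, not_exists, not_and, exists_prop, mem_filter]
    rw [mem_finsuppAntidiag]
    dsimp only [ne_eq, smul_eq_mul, id_eq, eq_mpr_eq_cast, le_eq_subset, Finsupp.coe_mk]
    simp only [mem_univ, forall_true_left, not_and, not_forall, exists_prop,
      mem_filter, true_and] at ha
    refine ⟨⟨?_, fun i ↦ ?_⟩, fun i _ ↦ ⟨a.parts.count i, ha.1 i, rfl⟩⟩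
    · conv_rhs => simp [← a.parts_sum]
      rw [sum_multiset_count_of_subset _ s]
      · simp only [smul_eq_mul]
      · intro i
        simp only [Multiset.mem_toFinset, not_not, mem_filter]
        apply ha.2
    · simp only [ne_eq, Multiset.mem_toFinset, not_not, mem_filter, and_imp]
      exact fun hi _ ↦ ha.2 i hi
  · intro p₁ hp₁ p₂ hp₂ h
    apply Nat.Partition.ext
    simp only [true_and, mem_univ, mem_filter] at hp₁ hp₂
    ext i
    simp only [φ, ne_eq, Multiset.mem_toFinset, not_not, smul_eq_mul, Finsupp.mk.injEq] at h
    by_cases hi : i = 0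
    · rw [hi]
      rw [Multiset.count_eq_zero_of_notMem]
      · rw [Multiset.count_eq_zero_of_notMem]
        intro a; exact Nat.lt_irrefl 0 (hs 0 (hp₂.2 0 a))
      intro a; exact Nat.lt_irrefl 0 (hs 0 (hp₁.2 0 a))
    · rw [← mul_left_inj' hi]
      rw [funext_iff] at h
      exact h.2 i
  · simp only [φ, mem_filter, mem_finsuppAntidiag, mem_univ, exists_prop, true_and, and_assoc]
    rintro f ⟨hf, hf₃, hf₄⟩
    have hf' : f ∈ finsuppAntidiag s n := mem_finsuppAntidiag.mpr ⟨hf, hf₃⟩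
    simp only [mem_finsuppAntidiag] at hf'
    refine ⟨⟨∑ i ∈ s, Multiset.replicate (f i / i) i, ?_, ?_⟩, ?_, ?_, ?_⟩
    · intro i hi
      simp only [exists_prop, Multiset.mem_sum, mem_map, Function.Embedding.coeFn_mk] at hi
      rcases hi with ⟨t, ht, z⟩
      apply hs
      rwa [Multiset.eq_of_mem_replicate z]
    · simp_rw [Multiset.sum_sum, Multiset.sum_replicate, Nat.nsmul_eq_mul]
      rw [← hf'.1]
      refine sum_congr rfl fun i hi => Nat.div_mul_cancel ?_
      rcases hf₄ i hi with ⟨w, _, hw₂⟩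
      rw [← hw₂]
      exact dvd_mul_left _ _
    · intro i
      simp_rw [Multiset.count_sum', Multiset.count_replicate, sum_ite_eq']
      split_ifs with h
      · rcases hf₄ i h with ⟨w, hw₁, hw₂⟩
        rwa [← hw₂, Nat.mul_div_cancel _ (hs i h)]
      · exact hc _ h
    · intro i hi
      rw [Multiset.mem_sum] at hi
      rcases hi with ⟨j, hj₁, hj₂⟩
      rwa [Multiset.eq_of_mem_replicate hj₂]
    · ext i
      simp_rw [Multiset.count_sum', Multiset.count_replicate, sum_ite_eq']
      simp only [ne_eq, Multiset.mem_toFinset, not_not, smul_eq_mul, ite_mul,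
        zero_mul, Finsupp.coe_mk]
      split_ifs with h
      · apply Nat.div_mul_cancel
        rcases hf₄ i h with ⟨w, _, hw₂⟩
        apply Dvd.intro_left _ hw₂
      · apply symm
        rw [← Finsupp.notMem_support_iff]
        exact notMem_mono hf'.2 h

-- ==== end of adapted archive code ====

end PS

section Final

instance fact_prime_5 : Fact (Nat.Prime 5) := ⟨by norm_num⟩

local notation "Xs" => (PowerSeries.X : PowerSeries (ZMod 5))

noncomputable def psi : Polynomial ℤ →+* PowerSeries (ZMod 5) :=
  (Polynomial.coeToPowerSeries.ringHom).comp (Polynomial.mapRingHom (Int.castRingHom (ZMod 5)))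

lemma psi_X : psi Polynomial.X = Xs := by
  simp [psi, Polynomial.coeToPowerSeries.ringHom_apply]

noncomputable def FF (m : ℕ) : PowerSeries (ZMod 5) := psi (ef m)

lemma FF_eq (m : ℕ) : FF m = ∏ i ∈ range m, (1 - Xs^(i+1)) := by
  rw [FF, ef, map_prod]
  apply Finset.prod_congr rfl
  intro i _
  rw [map_sub, map_one, map_pow, psi_X]

noncomputable def PP (m : ℕ) : PowerSeries (ZMod 5) :=
  ∏ i ∈ range m, (1 - Xs^(i+1))⁻¹

lemma constCoeff_one_sub_X_pow (i : ℕ) :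
    PowerSeries.constantCoeff (R := ZMod 5) (1 - Xs^(i+1)) = 1 := by
  rw [map_sub, map_one, map_pow, PowerSeries.constantCoeff_X, zero_pow (by omega), sub_zero]

lemma FP_one (m : ℕ) : FF m * PP m = 1 := by
  rw [FF_eq, PP, ← Finset.prod_mul_distrib]
  apply Finset.prod_eq_one
  intro i _
  apply PowerSeries.mul_inv_cancel
  rw [constCoeff_one_sub_X_pow]
  exact one_ne_zero

lemma FF_diff {a b : ℕ} (h : a ≤ b) : Xs^(a+1) ∣ FF b - FF a := by
  obtain ⟨c, rfl⟩ := Nat.exists_eq_add_of_le h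
  induction c with
  | zero => simp
  | succ c ih =>
    have hstep : FF (a + (c+1)) = FF (a+c) * (1 - Xs^(a+c+1)) := by
      rw [FF, FF, show a+(c+1) = (a+c)+1 from rfl, ef_succ, map_mul, map_sub, map_one,
        map_pow, psi_X]
    have h1 : FF (a+c) * (1 - Xs^(a+c+1)) - FF a
        = (FF (a+c) - FF a) - FF (a+c) * Xs^(a+c+1) := by ring
    rw [hstep, h1]
    apply dvd_sub (ih (by omega))
    exact Dvd.dvd.mul_left (pow_dvd_pow Xs (by omega)) _

lemma FFb {N t : ℕ} (ht : t ≤ N) :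
    Xs^(N-t+1) ∣ FF N * psi (gb (2*N+1) (N+1+t)) - 1 := by
  have hfac := congrArg psi (gb_factorial (2*N+1) (N+1+t) (by omega))
  rw [map_mul, map_mul, show 2*N+1-(N+1+t) = N-t from by omega] at hfac
  set b := psi (gb (2*N+1) (N+1+t)) with hb
  have key : (FF N * b - 1) * (FF (N+1+t) * FF (N-t))
      = (FF N - FF (N-t)) * FF (2*N+1) + FF (N-t) * (FF (2*N+1) - FF (N+1+t)) := by
    have hfac' : FF (N+1+t) * FF (N-t) * b = FF (2*N+1) := hfac
    linear_combination (FF N) * hfac'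
  have hdvd : Xs^(N-t+1) ∣ (FF N * b - 1) * (FF (N+1+t) * FF (N-t)) := by
    rw [key]
    apply dvd_add
    · exact Dvd.dvd.mul_right (FF_diff (by omega)) _
    · exact Dvd.dvd.mul_left
        (dvd_trans (pow_dvd_pow Xs (by omega)) (FF_diff (by omega))) _
  have hexp : FF N * b - 1
      = ((FF N * b - 1) * (FF (N+1+t) * FF (N-t))) * (PP (N+1+t) * PP (N-t)) := by
    have h1 := FP_one (N+1+t)
    have h2 := FP_one (N-t)
    calc FF N * b - 1 = (FF N * b - 1) * ((FF (N+1+t) * PP (N+1+t)) * (FF (N-t) * PP (N-t))) := by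
          rw [h1, h2]; ring
      _ = _ := by ring
  rw [hexp]
  exact Dvd.dvd.mul_right hdvd _

noncomputable def JJ (N : ℕ) : PowerSeries (ZMod 5) :=
  ∑ t ∈ range (N+1), PowerSeries.C (R := ZMod 5) ((-1)^t * ((2*t+1 : ℕ) : ZMod 5)) * Xs^(tri (t+1))

lemma psi_jacobi (N : ℕ) : (FF N)^2 = ∑ t ∈ range (N+1),
    PowerSeries.C (R := ZMod 5) ((-1)^t * ((2*t+1 : ℕ) : ZMod 5)) * Xs^(tri (t+1))
      * psi (gb (2*N+1) (N+1+t)) := by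
  have h := congrArg psi (jacobiSq N)
  rw [map_pow, map_sum] at h
  rw [FF, h]
  apply Finset.sum_congr rfl
  intro t _
  rw [map_mul, map_mul, map_mul, map_pow, map_neg, map_one, map_natCast, map_pow, psi_X]
  congr 2
  rw [map_mul, map_pow, map_neg, map_one, map_natCast]

lemma jacobi_dvd (N : ℕ) : Xs^(N+1) ∣ (FF N)^3 - JJ N := by
  have h2 : (FF N)^3 = ∑ t ∈ range (N+1),
      PowerSeries.C (R := ZMod 5) ((-1)^t * ((2*t+1 : ℕ) : ZMod 5)) * Xs^(tri (t+1))
        * (FF N * psi (gb (2*N+1) (N+1+t))) := by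
    rw [show (3:ℕ) = 2+1 from rfl, pow_add, pow_one, psi_jacobi, Finset.sum_mul]
    exact Finset.sum_congr rfl fun t _ => by ring
  rw [h2, JJ, ← Finset.sum_sub_distrib]
  apply Finset.dvd_sum
  intro t htm
  have ht : t ≤ N := Nat.lt_succ_iff.mp (Finset.mem_range.mp htm)
  have hre : PowerSeries.C (R := ZMod 5) ((-1)^t * ((2*t+1 : ℕ) : ZMod 5)) * Xs^(tri (t+1))
        * (FF N * psi (gb (2*N+1) (N+1+t)))
      - PowerSeries.C (R := ZMod 5) ((-1)^t * ((2*t+1 : ℕ) : ZMod 5)) * Xs^(tri (t+1))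
      = PowerSeries.C (R := ZMod 5) ((-1)^t * ((2*t+1 : ℕ) : ZMod 5))
        * (Xs^(tri (t+1)) * (FF N * psi (gb (2*N+1) (N+1+t)) - 1)) := by ring
  rw [hre]
  apply Dvd.dvd.mul_left
  have hd := FFb ht
  have := mul_dvd_mul_left (Xs^(tri (t+1))) hd
  apply dvd_trans ?_ this
  rw [← pow_add]
  apply pow_dvd_pow
  have := le_tri_succ t
  omega

noncomputable def epoly (N : ℕ) : Polynomial (ZMod 5) := (ef N).map (Int.castRingHom (ZMod 5))

noncomputable def GG (N : ℕ) : PowerSeries (ZMod 5) :=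
  ((Polynomial.expand (ZMod 5) 5 (epoly N) : Polynomial (ZMod 5)) : PowerSeries (ZMod 5))

lemma FF_coe (N : ℕ) : FF N = ((epoly N : Polynomial (ZMod 5)) : PowerSeries (ZMod 5)) := by
  rw [FF, psi, epoly]
  rfl

lemma FF_pow5 (N : ℕ) : (FF N)^5 = GG N := by
  have h1 : (epoly N)^5 = Polynomial.expand (ZMod 5) 5 (epoly N) := by
    rw [epoly, ef, Polynomial.map_prod, ← Finset.prod_pow, map_prod]
    apply Finset.prod_congr rfl
    intro i _
    rw [Polynomial.map_sub, Polynomial.map_one, Polynomial.map_pow, Polynomial.map_X]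
    rw [sub_pow_char, map_sub, map_one, map_pow, Polynomial.expand_X]
    rw [one_pow, ← pow_mul, ← pow_mul, mul_comm]
  rw [GG, ← h1, FF_coe, ← Polynomial.coe_pow]

lemma coeff_GG_not_dvd {N a : ℕ} (h : ¬ 5 ∣ a) : PowerSeries.coeff (R := ZMod 5) a (GG N) = 0 := by
  rw [GG, Polynomial.coeff_coe, Polynomial.coeff_expand (by norm_num), if_neg h]

lemma coeff_FF_zero (N : ℕ) : PowerSeries.coeff (R := ZMod 5) 0 (FF N) = 1 := by
  rw [FF_eq, PowerSeries.coeff_zero_eq_constantCoeff, map_prod]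
  rw [Finset.prod_congr rfl (fun i _ => constCoeff_one_sub_X_pow i), Finset.prod_const_one]

lemma coeff_GG_zero (N : ℕ) : PowerSeries.coeff (R := ZMod 5) 0 (GG N) = 1 := by
  rw [GG, Polynomial.coeff_coe, Polynomial.coeff_expand (by norm_num), if_pos (dvd_zero 5),
    Nat.zero_div]
  have := coeff_FF_zero N
  rw [FF_coe, Polynomial.coeff_coe] at this
  exact this

lemma cube_eq (N : ℕ) : (FF N)^3 = GG N * (PP N)^2 := by
  have h := FP_one N
  have h2 : (FF N)^3 = (FF N)^3 * (FF N * PP N)^2 := by rw [h, one_pow, mul_one]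
  rw [h2, ← FF_pow5 N]
  ring

lemma coeff_PP {N m : ℕ} (hm : m ≤ N) :
    PowerSeries.coeff (R := ZMod 5) m (PP N) = (Fintype.card (Nat.Partition m) : ZMod 5) := by
  classical
  have hprod : PP N = ∏ i ∈ (range N).map ⟨Nat.succ, Nat.succ_injective⟩,
      indicatorSeries (ZMod 5) ((· * i) '' Set.univ) := by
    rw [Finset.prod_map, PP]
    apply Finset.prod_congr rfl
    intro i _
    rw [num_series']
    have hset : {k | i + 1 ∣ k} = ((· * Nat.succ i) '' Set.univ) := by
      ext k
      simp only [Set.mem_setOf_eq, Set.mem_image, Set.mem_univ, true_and]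
      constructor
      · rintro ⟨p, rfl⟩
        exact ⟨p, mul_comm p (i+1)⟩
      · rintro ⟨p, rfl⟩
        exact ⟨p, mul_comm p (i+1)⟩
    rw [hset]
    rfl
  rw [hprod, ← partialGF_prop (ZMod 5) m _ ?_ (fun _ => Set.univ) (fun _ _ => trivial)]
  · norm_cast
    congr 1
    rw [← Finset.card_univ]
    congr 1
    rw [Finset.filter_true_of_mem]
    intro p _
    refine ⟨fun j => trivial, fun j hj => ?_⟩
    simp only [Finset.mem_map, Finset.mem_range, Function.Embedding.coeFn_mk]
    have h1 : 0 < j := p.parts_pos hj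
    have h2 : j ≤ m := by
      simpa [p.parts_sum] using Multiset.single_le_sum (fun _ _ => Nat.zero_le _) _ hj
    exact ⟨j-1, by omega, by omega⟩
  · intro i hi
    simp only [Finset.mem_map, Finset.mem_range, Function.Embedding.coeFn_mk] at hi
    obtain ⟨a, -, rfl⟩ := hi
    exact Nat.succ_pos a

lemma multipartition_two (m : ℕ) :
    multipartition 2 m = ∑ p ∈ Finset.HasAntidiagonal.antidiagonal m,
      Fintype.card (Nat.Partition p.1) * Fintype.card (Nat.Partition p.2) := by
  rw [multipartition, Finset.Nat.antidiagonalTuple_two, Finset.sum_map]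
  apply Finset.sum_congr rfl
  intro p _
  rw [Fin.prod_univ_two]
  simp [piFinTwoEquiv]

lemma coeff_TT {N m : ℕ} (hm : m ≤ N) :
    PowerSeries.coeff (R := ZMod 5) m ((PP N)^2) = (multipartition 2 m : ZMod 5) := by
  rw [sq, PowerSeries.coeff_mul, multipartition_two, Nat.cast_sum]
  apply Finset.sum_congr rfl
  rintro ⟨a, b⟩ hp
  have hab : a + b = m := Finset.HasAntidiagonal.mem_antidiagonal.mp hp
  rw [coeff_PP (show a ≤ N from by omega), coeff_PP (show b ≤ N from by omega), Nat.cast_mul]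

lemma tri_zmod {t n : ℕ} (h : tri (t+1) = 5*n+3) : ((2*t+1 : ℕ) : ZMod 5) = 0 := by
  have h2 : t*(t+1) = 10*n+6 := by have := two_mul_tri t; omega
  have hr : t % 5 = 2 := by
    have hdm := Nat.div_add_mod t 5
    set q := t / 5 with hq
    set r := t % 5 with hrdef
    have hrlt : r < 5 := Nat.mod_lt _ (by norm_num)
    have hexpand : (5*q+r)*((5*q+r)+1) = 5*(5*q*q + q*r + q + q*r) + r*(r+1) := by ring
    have hteq : t = 5*q + r := by omega
    have hmod : t*(t+1) % 5 = (r*(r+1)) % 5 := by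
      rw [hteq, hexpand, Nat.mul_add_mod]
    rw [h2] at hmod
    generalize hs : r*(r+1) = s at hmod
    interval_cases r <;> omega
  rw [ZMod.natCast_eq_zero_iff]
  omega

lemma coeff_JJ (N n : ℕ) : PowerSeries.coeff (R := ZMod 5) (5*n+3) (JJ N) = 0 := by
  rw [JJ, map_sum]
  apply Finset.sum_eq_zero
  intro t _
  rw [PowerSeries.coeff_C_mul, PowerSeries.coeff_X_pow]
  split_ifs with h
  · rw [tri_zmod h.symm, mul_zero, zero_mul]
  · rw [mul_zero]

theorem multipartition_two_five (n : ℕ) : 5 ∣ multipartition 2 (5 * n + 3) := by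
  suffices key : ∀ m : ℕ, m ≤ n → (multipartition 2 (5*m+3) : ZMod 5) = 0 by
    have h := key n le_rfl
    exact (ZMod.natCast_eq_zero_iff _ 5).mp h
  intro m
  induction m using Nat.strong_induction_on with
  | _ m ih =>
    intro hm
    set N := 5*n+3 with hN
    have hmN : 5*m+3 ≤ N := by omega
    have hd := jacobi_dvd N
    rw [cube_eq] at hd
    have hcoeff : PowerSeries.coeff (R := ZMod 5) (5*m+3) (GG N * (PP N)^2)
        = PowerSeries.coeff (R := ZMod 5) (5*m+3) (JJ N) := by
      have h0 := PowerSeries.X_pow_dvd_iff.mp hd (5*m+3) (by omega)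
      rw [map_sub, sub_eq_zero] at h0
      exact h0
    rw [coeff_JJ, PowerSeries.coeff_mul] at hcoeff
    rw [Finset.sum_eq_single_of_mem ((0 : ℕ), 5*m+3)
      (Finset.HasAntidiagonal.mem_antidiagonal.mpr (by omega)) ?rest] at hcoeff
    · rw [coeff_GG_zero, one_mul, coeff_TT hmN] at hcoeff
      exact hcoeff
    case rest =>
      rintro ⟨a, b⟩ hpmem hpne
      have hab : a + b = 5*m+3 := Finset.HasAntidiagonal.mem_antidiagonal.mp hpmem
      by_cases h5 : 5 ∣ a
      · obtain ⟨j, rfl⟩ := h5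
        have hj : 1 ≤ j := by
          rcases Nat.eq_zero_or_pos j with h | h
          · exfalso
            apply hpne
            have hb : b = 5*m+3 := by omega
            rw [h, hb, mul_zero]
          · exact h
        have hjm : j ≤ m := by omega
        have hb : b = 5*(m-j)+3 := by omega
        rw [coeff_TT (show b ≤ N from by omega), hb, ih (m-j) (by omega) (by omega), mul_zero]
      · rw [coeff_GG_not_dvd h5, zero_mul]

end Final
end
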